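/- Let λ be an index set of cardinality greater than ℵ₁, let X be a subset of the product [1/2, 1]^λ, let S := {(x_i) ∈ [0,1]^λ : the support {i ∈ λ : x_i ≠ 0} is countable}, and let Y := S ∪ X carry the subspace topology of [0,1]^λ. Then Y is pseudocompact, Y is an Ascoli space, and X is a closed subset of Y. -/

import Mathlib

open Set Filter Topology

/-- A set `H` of continuous real-valued functions is equicontinuous. -/
def EquicontinuousSet {X : Type*} [TopologicalSpace X] (H : Set C(X, ℝ)) : Prop :=
  ∀ x : X, ∀ ε : ℝ, 0 < ε → ∃ U ∈ 𝓝 x, ∀ x' ∈ U, ∀ f ∈ H, |f x' - f x| < ε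

/-- `X` is Ascoli: every compact subset of `C_k(X)` is equicontinuous. -/
def AscoliSpace (X : Type*) [TopologicalSpace X] : Prop :=
  ∀ K : Set C(X, ℝ), IsCompact K → EquicontinuousSet K

/-- `X` is sequentially Ascoli: every convergent sequence in `C_k(X)` is equicontinuous. -/
def SeqAscoliSpace (X : Type*) [TopologicalSpace X] : Prop :=
  ∀ (f : ℕ → C(X, ℝ)) (g : C(X, ℝ)), Tendsto f atTop (𝓝 g) →
    EquicontinuousSet (Set.range f ∪ {g})

/-- A function is `k`-continuous if its restriction to every compact subset is continuous. -/
def KContinuous {X Y : Type*} [TopologicalSpace X] [TopologicalSpace Y] (f : X → Y) : Prop :=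
  ∀ K : Set X, IsCompact K → ContinuousOn f K

/-- `X` is a `k_ℝ`-space if every `k`-continuous real-valued function is continuous. -/
def KRSpace (X : Type*) [TopologicalSpace X] : Prop :=
  ∀ f : X → ℝ, KContinuous f → Continuous f

/-- `X` is an `s_ℝ`-space if every sequentially continuous real-valued function is continuous. -/
def SRSpace (X : Type*) [TopologicalSpace X] : Prop :=
  ∀ f : X → ℝ, SeqContinuous f → Continuous f

/-- A function on a product is separately continuous. -/
def SeparatelyContinuous {X K : Type*} [TopologicalSpace X] [TopologicalSpace K]
    (Φ : X × K → ℝ) : Prop :=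
  (∀ x : X, Continuous fun k => Φ (x, k)) ∧ (∀ k : K, Continuous fun x => Φ (x, k))

/-- `X` is pseudocompact: every continuous real-valued function on `X` is bounded. -/
def Pseudocompact (X : Type*) [TopologicalSpace X] : Prop :=
  ∀ f : X → ℝ, Continuous f → ∃ M : ℝ, ∀ x : X, |f x| ≤ M

/-- A subset `A` of `X` is functionally bounded if every continuous real-valued
function on `X` is bounded on `A`. -/
def FunctionallyBounded {X : Type*} [TopologicalSpace X] (A : Set X) : Prop :=
  ∀ f : X → ℝ, Continuous f → ∃ M : ℝ, ∀ a ∈ A, |f a| ≤ M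

/-- An `R`-quotient map: a continuous surjection such that real-valued functions on the
codomain are continuous as soon as their composition with the map is continuous. -/
def RQuotientMap {X Y : Type*} [TopologicalSpace X] [TopologicalSpace Y] (p : X → Y) : Prop :=
  Continuous p ∧ Function.Surjective p ∧ ∀ φ : Y → ℝ, Continuous (φ ∘ p) → Continuous φ

open scoped Classical

namespace PAC
variable {ι : Type*}

abbrev PP (ι : Type*) := ι → Set.Icc (0:ℝ) 1

def z0 : Set.Icc (0:ℝ) 1 := ⟨0, le_refl 0, zero_le_one⟩

noncomputable def rA (A : Set ι) (x : PP ι) : PP ι :=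
  fun i => if i ∈ A then x i else z0

lemma rA_mem (A : Set ι) (x : PP ι) (i : ι) (hi : i ∈ A) : rA A x i = x i := by
  simp [rA, hi]
lemma rA_not_mem (A : Set ι) (x : PP ι) (i : ι) (hi : i ∉ A) : rA A x i = z0 := by
  simp [rA, hi]

lemma continuous_rA (A : Set ι) : Continuous (rA A : PP ι → PP ι) := by
  refine continuous_pi fun i => ?_
  by_cases h : i ∈ A
  · simpa [rA, h] using continuous_apply (A := fun _ : ι => Set.Icc (0:ℝ) 1) i
  · simp only [rA, h, if_false]
    exact continuous_const

def CA (A : Set ι) : Set (PP ι) := {x | ∀ i, i ∉ A → x i = z0}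

lemma rA_mem_CA (A : Set ι) (x : PP ι) : rA A x ∈ CA A := fun i hi => by
  simp [rA, hi]

lemma isCompact_CA (A : Set ι) : IsCompact (CA A) := by
  have h : CA A = ⋂ (i : ι) (_ : i ∉ A), (fun x : PP ι => x i) ⁻¹' {z0} := by
    ext x; simp [CA]
  have hc : IsClosed (CA A) := by
    rw [h]
    exact isClosed_iInter fun i => isClosed_iInter fun _ =>
      isClosed_singleton.preimage (continuous_apply i)
  exact hc.isCompact

lemma supp_rA_subset (A : Set ι) (x : PP ι) :
    {i : ι | ((rA A x i : ℝ)) ≠ 0} ⊆ A := by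
  intro i hi
  by_contra h
  exact hi (by rw [rA_not_mem A x i h]; rfl)


/-- Basic neighborhood extraction: continuity at a point of a subspace of a product gives
a finite set of coordinates and a `δ`. -/
lemma basic_nbhd {Y : Set (PP ι)} (f : ↥Y → ℝ) (hf : Continuous f) (y : ↥Y) {ε : ℝ}
    (hε : 0 < ε) :
    ∃ (F : Finset ι) (δ : ℝ), 0 < δ ∧
      ∀ z : ↥Y, (∀ i ∈ F, dist ((z : PP ι) i) ((y : PP ι) i) < δ) → |f z - f y| < ε := by
  have hpre : f ⁻¹' Metric.ball (f y) ε ∈ 𝓝 y :=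
    hf.continuousAt.preimage_mem_nhds (Metric.ball_mem_nhds _ hε)
  rw [mem_nhds_subtype] at hpre
  obtain ⟨W, hW, hWsub⟩ := hpre
  rw [nhds_pi, Filter.mem_pi] at hW
  obtain ⟨I, hIfin, t, ht, htsub⟩ := hW
  have hd : ∀ i : ι, ∃ d : ℝ, 0 < d ∧ (i ∈ I → Metric.ball ((y : PP ι) i) d ⊆ t i) := by
    intro i
    by_cases hi : i ∈ I
    · obtain ⟨d, hd, hball⟩ := Metric.mem_nhds_iff.mp (ht i)
      exact ⟨d, hd, fun _ => hball⟩
    · exact ⟨1, one_pos, fun h => absurd h hi⟩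
  choose d hd0 hdball using hd
  refine ⟨hIfin.toFinset, (insert (1:ℝ) (hIfin.toFinset.image d)).min'
    (Finset.insert_nonempty _ _), ?_, ?_⟩
  · rw [Finset.lt_min'_iff]
    intro b hb
    rcases Finset.mem_insert.mp hb with h1 | h2
    · rw [h1]; exact one_pos
    · obtain ⟨i, _, rfl⟩ := Finset.mem_image.mp h2
      exact hd0 i
  · intro z hz
    have hzW : (z : PP ι) ∈ W := by
      apply htsub
      intro i hiI
      have hiF : i ∈ hIfin.toFinset := hIfin.mem_toFinset.mpr hiI
      have hle : (insert (1:ℝ) (hIfin.toFinset.image d)).min' (Finset.insert_nonempty _ _)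
          ≤ d i :=
        Finset.min'_le _ _ (Finset.mem_insert_of_mem (Finset.mem_image_of_mem d hiF))
      have := lt_of_lt_of_le (hz i hiF) hle
      exact hdball i hiI (Metric.mem_ball.mpr this)
    have := hWsub hzW
    rw [Set.mem_preimage, Metric.mem_ball, Real.dist_eq] at this
    exact this


/-- Cover step: the compact slice `CA B` is covered by finitely many good basic
neighborhoods whose coordinate supports gather into a countable set `E`. -/
lemma cover_step {Y : Set (PP ι)} (hCAY : ∀ A : Set ι, A.Countable → CA A ⊆ Y)
    (f : ↥Y → ℝ) (hf : Continuous f) (B : Set ι) (hB : B.Countable) {ε : ℝ} (hε : 0 < ε) :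
    ∃ E : Set ι, E.Countable ∧ ∀ v : ↥Y, (v : PP ι) ∈ CA B →
      ∃ (F : Finset ι) (δ : ℝ) (d : ↥Y), 0 < δ ∧ ↑F ⊆ E ∧
        (∀ i ∈ F, dist ((v : PP ι) i) ((d : PP ι) i) < δ) ∧
        (∀ z : ↥Y, (∀ i ∈ F, dist ((z : PP ι) i) ((d : PP ι) i) < δ) → |f z - f d| < ε) := by
  have hsubY : CA B ⊆ Y := hCAY B hB
  -- index type: points of the slice
  let κ := ↥(CA B)
  let de : κ → ↥Y := fun p => ⟨p.1, hsubY p.2⟩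
  have hgood : ∀ p : κ, ∃ (F : Finset ι) (δ : ℝ), 0 < δ ∧
      ∀ z : ↥Y, (∀ i ∈ F, dist ((z : PP ι) i) (p.1 i) < δ) → |f z - f (de p)| < ε := by
    intro p
    obtain ⟨F, δ, hδ, hg⟩ := basic_nbhd f hf (de p) hε
    exact ⟨F, δ, hδ, hg⟩
  choose Fd δd hδd hgd using hgood
  let U : κ → Set (PP ι) := fun p => {x | ∀ i ∈ Fd p, dist (x i) (p.1 i) < δd p}
  have hUopen : ∀ p, IsOpen (U p) := by
    intro p
    have : U p = ⋂ i ∈ Fd p, (fun x : PP ι => x i) ⁻¹' Metric.ball (p.1 i) (δd p) := by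
      ext x; simp [U, Metric.mem_ball]
    rw [this]
    exact isOpen_biInter_finset fun i _ =>
      (Metric.isOpen_ball).preimage (continuous_apply i)
  have hUcover : CA B ⊆ ⋃ p : κ, U p := by
    intro x hx
    exact Set.mem_iUnion.mpr ⟨⟨x, hx⟩, fun i _ => by simpa using hδd ⟨x, hx⟩⟩
  obtain ⟨T, hT⟩ := (isCompact_CA B).elim_finite_subcover U hUopen hUcover
  refine ⟨⋃ p ∈ T, (Fd p : Set ι), ?_, ?_⟩
  · exact (T.finite_toSet.biUnion (fun p _ => (Fd p).finite_toSet)).countable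
  · intro v hv
    obtain ⟨p, hpT, hpU⟩ := by
      have := hT hv
      rw [Set.mem_iUnion₂] at this
      exact this
    exact ⟨Fd p, δd p, de p, hδd p, fun i hi => Set.mem_biUnion hpT hi, hpU, hgd p⟩

/-- Every continuous real-valued function on `Y` depends on countably many coordinates. -/
theorem countable_dependence {Y : Set (PP ι)}
    (hCAY : ∀ A : Set ι, A.Countable → CA A ⊆ Y)
    (hSY : ∀ x : PP ι, Set.Countable {i : ι | ((x i : ℝ)) ≠ 0} → x ∈ Y)
    (f : ↥Y → ℝ) (hf : Continuous f) :
    ∃ A : Set ι, A.Countable ∧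
      ∀ u v : ↥Y, (∀ i ∈ A, (u : PP ι) i = (v : PP ι) i) → f u = f v := by
  -- the one-step enlargement
  have step : ∀ B : Set ι, B.Countable → ∃ E : Set ι, E.Countable ∧
      ∀ (m : ℕ), ∀ v : ↥Y, (v : PP ι) ∈ CA B →
      ∃ (F : Finset ι) (δ : ℝ) (d : ↥Y), 0 < δ ∧ ↑F ⊆ E ∧
        (∀ i ∈ F, dist ((v : PP ι) i) ((d : PP ι) i) < δ) ∧
        (∀ z : ↥Y, (∀ i ∈ F, dist ((z : PP ι) i) ((d : PP ι) i) < δ) →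
          |f z - f d| < 1 / (m + 1)) := by
    intro B hB
    have hpos : ∀ m : ℕ, (0:ℝ) < 1 / (m + 1) := fun m => by positivity
    choose E hEc hEgood using fun m : ℕ => cover_step hCAY f hf B hB (hpos m)
    refine ⟨⋃ m, E m, countable_iUnion hEc, fun m v hv => ?_⟩
    obtain ⟨F, δ, d, h1, h2, h3, h4⟩ := hEgood m v hv
    exact ⟨F, δ, d, h1, h2.trans (Set.subset_iUnion E m), h3, h4⟩
  -- the recursion
  let stepc : {s : Set ι // s.Countable} → {s : Set ι // s.Countable} := fun B =>
    ⟨B.1 ∪ (step B.1 B.2).choose, B.2.union (step B.1 B.2).choose_spec.1⟩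
  let Aseq : ℕ → {s : Set ι // s.Countable} := fun n => stepc^[n] ⟨∅, countable_empty⟩
  have hAsucc : ∀ n, Aseq (n + 1) = stepc (Aseq n) := fun n =>
    Function.iterate_succ_apply' stepc n _
  have hAmono1 : ∀ n, (Aseq n).1 ⊆ (Aseq (n + 1)).1 := by
    intro n; rw [hAsucc n]; exact Set.subset_union_left
  have hAmono : ∀ m n, m ≤ n → (Aseq m).1 ⊆ (Aseq n).1 := by
    intro m n h
    induction n with
    | zero => rw [Nat.le_zero.mp h]
    | succ k ih =>
      rcases Nat.lt_or_ge m (k+1) with h1 | h2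
      · exact (ih (Nat.lt_succ_iff.mp h1)).trans (hAmono1 k)
      · rw [Nat.le_antisymm h h2]
  set A : Set ι := ⋃ n, (Aseq n).1 with hAdef
  have hAc : A.Countable := countable_iUnion fun n => (Aseq n).2
  have hAn_sub : ∀ n, (Aseq n).1 ⊆ A := fun n => Set.subset_iUnion (fun n => (Aseq n).1) n
  -- finite subsets of A are inside some stage
  have hchain : ∀ J : Set ι, J.Finite → J ⊆ A → ∃ n, J ⊆ (Aseq n).1 := by
    intro J hJ hJA
    have hg : ∀ i : ι, ∃ n : ℕ, i ∈ J → i ∈ (Aseq n).1 := by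
      intro i
      by_cases hi : i ∈ J
      · obtain ⟨n, hn⟩ := Set.mem_iUnion.mp (hJA hi)
        exact ⟨n, fun _ => hn⟩
      · exact ⟨0, fun h => absurd h hi⟩
    choose g hgmem using hg
    refine ⟨hJ.toFinset.sup g, ?_⟩
    intro i hi
    exact hAmono (g i) _ (Finset.le_sup (hJ.mem_toFinset.mpr hi)) (hgmem i hi)
  -- membership of rA A u in Y
  have hrAY : ∀ x : PP ι, rA A x ∈ Y := by
    intro x
    apply hSY
    apply Set.Countable.mono _ hAc
    intro i hi
    by_contra h
    exact hi (by rw [rA_not_mem A x i h]; rfl)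
  -- core: finite-support points
  have core : ∀ u : ↥Y, ({i : ι | (u : PP ι) i ≠ z0}).Finite →
      f u = f ⟨rA A u, hrAY u⟩ := by
    intro u hufin
    set v : ↥Y := ⟨rA A (u : PP ι), hrAY u⟩ with hvdef
    have hsuppv : {i : ι | (v : PP ι) i ≠ z0} ⊆ {i : ι | (u : PP ι) i ≠ z0} := by
      intro i hi
      by_contra h
      simp only [Set.mem_setOf_eq, not_not] at h
      apply hi
      show rA A (u : PP ι) i = z0
      by_cases hiA : i ∈ A
      · rw [rA_mem A _ i hiA, h]
      · exact rA_not_mem A _ i hiA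
    have hsuppvA : {i : ι | (v : PP ι) i ≠ z0} ⊆ A := by
      intro i hi
      by_contra h
      exact hi (rA_not_mem A _ i h)
    obtain ⟨n, hn⟩ := hchain _ (hufin.subset hsuppv) hsuppvA
    have hvCA : (v : PP ι) ∈ CA (Aseq n).1 := by
      intro i hi
      by_contra h
      exact hi (hn h)
    -- for every m, |f u - f v| < 2/(m+1)
    have key : ∀ m : ℕ, |f u - f v| < 2 / (m + 1) := by
      intro m
      obtain ⟨F, δ, d, hδ, hFE, hvd, hgood⟩ := (step (Aseq n).1 (Aseq n).2).choose_spec.2 m v hvCA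
      have hFA : (F : Set ι) ⊆ A := by
        refine hFE.trans ?_
        refine Set.Subset.trans ?_ (hAn_sub (n+1))
        rw [hAsucc n]
        exact Set.subset_union_right
      have h1 : |f v - f d| < 1 / (m+1) := hgood v hvd
      have h2 : |f u - f d| < 1 / (m+1) := by
        apply hgood
        intro i hi
        have hiA : i ∈ A := hFA hi
        have : (v : PP ι) i = (u : PP ι) i := rA_mem A _ i hiA
        rw [← this]
        exact hvd i hi
      calc |f u - f v| ≤ |f u - f d| + |f d - f v| := abs_sub_le _ _ _
        _ < 1/(m+1) + 1/(m+1) := by rw [abs_sub_comm (f d)]; exact add_lt_add h2 h1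
        _ = 2/(m+1) := by ring
    by_contra hne
    have hpos : 0 < |f u - f v| := abs_pos.mpr (sub_ne_zero.mpr hne)
    obtain ⟨m, hm⟩ := exists_nat_gt (2 / |f u - f v|)
    have : 2 / ((m:ℝ) + 1) < |f u - f v| := by
      rw [div_lt_iff₀ (by positivity)]
      rw [div_lt_iff₀ hpos] at hm
      calc (2:ℝ) < m * |f u - f v| := hm
        _ ≤ |f u - f v| * (m + 1) := by nlinarith [abs_nonneg (f u - f v)]
    exact absurd (key m) (not_lt.mpr this.le)
  -- general case
  refine ⟨A, hAc, ?_⟩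
  intro u w hagree
  have key : ∀ ε : ℝ, 0 < ε → |f u - f w| < 4 * ε := by
    intro ε hε
    obtain ⟨Fu, δu, hδu, hgu⟩ := basic_nbhd f hf u hε
    obtain ⟨Fw, δw, hδw, hgw⟩ := basic_nbhd f hf w hε
    set F : Finset ι := Fu ∪ Fw with hF
    have mkY : ∀ x : ↥Y, (fun i => if i ∈ F then (x : PP ι) i else z0) ∈ Y := by
      intro x
      apply hSY
      apply Set.Countable.mono _ F.countable_toSet
      intro i hi
      simp only [Set.mem_setOf_eq] at hi
      by_cases hiF : i ∈ F
      · exact hiF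
      · exact absurd (by rw [if_neg hiF]; rfl) hi
    set uF : ↥Y := ⟨fun i => if i ∈ F then (u : PP ι) i else z0, mkY u⟩ with huF
    set wF : ↥Y := ⟨fun i => if i ∈ F then (w : PP ι) i else z0, mkY w⟩ with hwF
    have hu1 : |f uF - f u| < ε := by
      apply hgu
      intro i hi
      have : (uF : PP ι) i = (u : PP ι) i := by
        show (if i ∈ F then (u : PP ι) i else z0) = _
        simp [hF, Finset.mem_union, hi]
      rw [this, dist_self]; exact hδu
    have hw1 : |f wF - f w| < ε := by
      apply hgw
      intro i hi
      have : (wF : PP ι) i = (w : PP ι) i := by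
        show (if i ∈ F then (w : PP ι) i else z0) = _
        simp [hF, Finset.mem_union, hi]
      rw [this, dist_self]; exact hδw
    have hufin : ({i : ι | (uF : PP ι) i ≠ z0}).Finite := by
      apply Set.Finite.subset F.finite_toSet
      intro i hi
      simp only [Set.mem_setOf_eq] at hi
      by_cases hiF : i ∈ F
      · exact hiF
      · exact absurd (if_neg hiF) hi
    have hwfin : ({i : ι | (wF : PP ι) i ≠ z0}).Finite := by
      apply Set.Finite.subset F.finite_toSet
      intro i hi
      simp only [Set.mem_setOf_eq] at hi
      by_cases hiF : i ∈ F
      · exact hiF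
      · exact absurd (if_neg hiF) hi
    have hreq : rA A (uF : PP ι) = rA A (wF : PP ι) := by
      funext i
      by_cases hiA : i ∈ A
      · rw [rA_mem A _ i hiA, rA_mem A _ i hiA]
        show (if i ∈ F then (u : PP ι) i else z0) = (if i ∈ F then (w : PP ι) i else z0)
        by_cases hiF : i ∈ F
        · simp only [hiF, if_true]; exact hagree i hiA
        · simp [hiF]
      · rw [rA_not_mem A _ i hiA, rA_not_mem A _ i hiA]
    have heq : f uF = f wF := by
      rw [core uF hufin, core wF hwfin]
      congr 1
      exact Subtype.ext hreq
    have h3 : |f uF - f wF| = 0 := by rw [heq, sub_self, abs_zero]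
    have t1 := abs_sub_le (f u) (f uF) (f w)
    have t2 := abs_sub_le (f uF) (f wF) (f w)
    have e1 : |f u - f uF| = |f uF - f u| := abs_sub_comm _ _
    have e2 : |f wF - f w| = |f w - f wF| := abs_sub_comm _ _
    linarith
  by_contra hne
  have hpos : 0 < |f u - f w| := abs_pos.mpr (sub_ne_zero.mpr hne)
  have := key (|f u - f w| / 8) (by positivity)
  linarith

lemma rA_mem_Y {Y : Set (PP ι)}
    (hCAY : ∀ A : Set ι, A.Countable → CA A ⊆ Y) {A : Set ι} (hA : A.Countable)
    (x : PP ι) : rA A x ∈ Y := hCAY A hA (rA_mem_CA A x)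

/-- The slice inside the subtype is compact. -/
lemma isCompact_slice {Y : Set (PP ι)} {A : Set ι} (hsub : CA A ⊆ Y) :
    IsCompact (Subtype.val ⁻¹' (CA A) : Set ↥Y) := by
  rw [Topology.IsEmbedding.subtypeVal.isCompact_iff]
  have : Subtype.val '' (Subtype.val ⁻¹' (CA A) : Set ↥Y) = CA A := by
    rw [Subtype.image_preimage_coe]
    exact Set.inter_eq_self_of_subset_right hsub
  rw [this]
  exact isCompact_CA A

lemma pseudocompact_of {Y : Set (PP ι)}
    (hCAY : ∀ A : Set ι, A.Countable → CA A ⊆ Y)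
    (hSY : ∀ x : PP ι, Set.Countable {i : ι | ((x i : ℝ)) ≠ 0} → x ∈ Y) :
    Pseudocompact ↥Y := by
  intro f hf
  obtain ⟨A, hAc, hdep⟩ := countable_dependence hCAY hSY f hf
  set ZS : Set ↥Y := Subtype.val ⁻¹' (CA A) with hZS
  have hcomp : IsCompact ZS := isCompact_slice (hCAY A hAc)
  have hne : ZS.Nonempty := by
    refine ⟨⟨rA A (fun _ => z0), rA_mem_Y hCAY hAc _⟩, ?_⟩
    exact rA_mem_CA A _
  obtain ⟨x₀, _, hmax⟩ := hcomp.exists_isMaxOn hne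
    (continuous_abs.comp hf).continuousOn
  refine ⟨|f x₀|, fun x => ?_⟩
  have hxa : f x = f ⟨rA A (x : PP ι), rA_mem_Y hCAY hAc _⟩ := by
    apply hdep
    intro i hi
    exact (rA_mem A _ i hi).symm
  rw [hxa]
  exact hmax (show (⟨rA A (x : PP ι), _⟩ : ↥Y) ∈ ZS from rA_mem_CA A _)

lemma ascoli_of {Y : Set (PP ι)}
    (hCAY : ∀ A : Set ι, A.Countable → CA A ⊆ Y)
    (hSY : ∀ x : PP ι, Set.Countable {i : ι | ((x i : ℝ)) ≠ 0} → x ∈ Y) :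
    AscoliSpace ↥Y := by
  intro K hK
  -- Step 1: K is "totally bounded" in the sup distance
  have net : ∀ δ : ℝ, 0 < δ → ∃ T : Finset C(↥Y, ℝ), ↑T ⊆ K ∧
      ∀ f ∈ K, ∃ g ∈ T, ∀ y : ↥Y, |f y - g y| ≤ δ := by
    intro δ hδ
    by_contra hno
    push_neg at hno
    -- build a δ-separated sequence
    have choice : ∀ T : Finset C(↥Y, ℝ), ∃ h : C(↥Y, ℝ), ↑T ⊆ K →
        h ∈ K ∧ ∀ g ∈ T, ∃ y : ↥Y, δ < |h y - g y| := by
      intro T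
      by_cases hT : ↑T ⊆ K
      · obtain ⟨ff, hf1, hf2⟩ := hno T hT
        exact ⟨ff, fun _ => ⟨hf1, hf2⟩⟩
      · exact ⟨ContinuousMap.const _ 0, fun h => absurd h hT⟩
    choose nf hnf using choice
    let Ts : ℕ → Finset C(↥Y, ℝ) := fun n => Nat.rec ∅ (fun _ T => insert (nf T) T) n
    have hTsucc : ∀ n, Ts (n+1) = insert (nf (Ts n)) (Ts n) := fun n => rfl
    have hTsK : ∀ n, ∀ g ∈ Ts n, g ∈ K := by
      intro n
      induction n with
      | zero => intro g hg; simp [Ts] at hg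
      | succ k ih =>
        intro g hg
        rw [hTsucc k] at hg
        rcases Finset.mem_insert.mp hg with rfl | hgk
        · exact (hnf (Ts k) ih).1
        · exact ih g hgk
    set φ : ℕ → C(↥Y, ℝ) := fun n => nf (Ts n) with hφ
    have hφK : ∀ n, φ n ∈ K := fun n => (hnf (Ts n) (hTsK n)).1
    have hφmem : ∀ n, φ n ∈ Ts (n+1) := fun n => by
      rw [hTsucc n]; exact Finset.mem_insert_self _ _
    have hTsMono : ∀ m n, m ≤ n → Ts m ⊆ Ts n := by
      intro m n h
      induction n with
      | zero => rw [Nat.le_zero.mp h]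
      | succ k ih =>
        rcases Nat.lt_or_ge m (k+1) with h1 | h2
        · refine (ih (Nat.lt_succ_iff.mp h1)).trans ?_
          rw [hTsucc k]; exact Finset.subset_insert _ _
        · rw [Nat.le_antisymm h h2]
    have hsep : ∀ m n, m < n → ∃ y : ↥Y, δ < |φ n y - φ m y| := by
      intro m n h
      exact (hnf (Ts n) (hTsK n)).2 (φ m) (hTsMono (m+1) n h (hφmem m))
    -- countable dependence for all φ n simultaneously
    have hdep : ∀ n : ℕ, ∃ A : Set ι, A.Countable ∧
        ∀ u v : ↥Y, (∀ i ∈ A, (u : PP ι) i = (v : PP ι) i) → φ n u = φ n v :=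
      fun n => countable_dependence hCAY hSY (φ n) (φ n).continuous
    choose D hDc hDdep using hdep
    set A : Set ι := ⋃ n, D n with hA
    have hAc : A.Countable := countable_iUnion hDc
    set ZS : Set ↥Y := Subtype.val ⁻¹' (CA A) with hZS
    have hcomp : IsCompact ZS := isCompact_slice (hCAY A hAc)
    haveI : CompactSpace ↥ZS := isCompact_iff_compactSpace.mp hcomp
    let ρ : C(↥Y, ℝ) → C(↥ZS, ℝ) := fun g =>
      g.comp ⟨fun z => (z : ↥Y), continuous_subtype_val⟩
    have hρ : Continuous ρ := ContinuousMap.continuous_precomp _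
    -- cluster point of the sequence φ in K
    have hle : Filter.map φ atTop ≤ 𝓟 K := by
      rw [Filter.le_principal_iff, Filter.mem_map]
      exact Filter.Eventually.of_forall hφK
    obtain ⟨g₀, _, hcl⟩ := hK.exists_clusterPt hle
    have hclρ : MapClusterPt (ρ g₀) atTop (ρ ∘ φ) :=
      MapClusterPt.continuousAt_comp hρ.continuousAt hcl
    rw [mapClusterPt_iff_frequently] at hclρ
    have hfreq := hclρ (Metric.ball (ρ g₀) (δ/2)) (Metric.ball_mem_nhds _ (by positivity))
    obtain ⟨n, hn⟩ := hfreq.exists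
    obtain ⟨m, hm, hmn⟩ := (hfreq.and_eventually (eventually_gt_atTop n)).exists
    have hd : dist (ρ (φ m)) (ρ (φ n)) < δ := by
      have h1 : dist (ρ (φ m)) (ρ g₀) < δ/2 := by simpa [Function.comp] using hm
      have h2 : dist (ρ (φ n)) (ρ g₀) < δ/2 := by simpa [Function.comp] using hn
      calc dist (ρ (φ m)) (ρ (φ n)) ≤ dist (ρ (φ m)) (ρ g₀) + dist (ρ (φ n)) (ρ g₀) :=
            dist_triangle_right _ _ _
        _ < δ/2 + δ/2 := add_lt_add h1 h2
        _ = δ := by ring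
    obtain ⟨y, hy⟩ := hsep n m hmn
    -- transfer the separation to the compact slice
    set z : ↥Y := ⟨rA A (y : PP ι), rA_mem_Y hCAY hAc _⟩ with hz
    have hzZS : z ∈ ZS := rA_mem_CA A _
    set zz : ↥ZS := ⟨z, hzZS⟩ with hzz
    have hagree : ∀ k : ℕ, φ k y = φ k z := by
      intro k
      apply hDdep k
      intro i hi
      have hiA : i ∈ A := Set.mem_iUnion.mpr ⟨k, hi⟩
      exact (rA_mem A _ i hiA).symm
    have hdist : δ < dist (ρ (φ m)) (ρ (φ n)) := by
      have : δ < |(ρ (φ m)) zz - (ρ (φ n)) zz| := by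
        show δ < |φ m z - φ n z|
        rw [← hagree m, ← hagree n]
        exact hy
      calc δ < |(ρ (φ m)) zz - (ρ (φ n)) zz| := this
        _ = dist ((ρ (φ m)) zz) ((ρ (φ n)) zz) := (Real.dist_eq _ _).symm
        _ ≤ dist (ρ (φ m)) (ρ (φ n)) := ContinuousMap.dist_apply_le_dist zz
    exact absurd hd (not_lt.mpr hdist.le)
  -- Step 2: equicontinuity from the finite nets
  intro x₀ ε hε
  obtain ⟨T, hTK, hTnet⟩ := net (ε/4) (by positivity)
  have hU : ∀ g : C(↥Y, ℝ), g ∈ T → ∃ U ∈ 𝓝 x₀, ∀ y ∈ U, |g y - g x₀| < ε/4 := by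
    intro g _
    have := g.continuous.continuousAt (x := x₀)
    have hball := this.preimage_mem_nhds (Metric.ball_mem_nhds (g x₀) (show (0:ℝ) < ε/4 by positivity))
    refine ⟨_, hball, ?_⟩
    intro y hy
    rw [Set.mem_preimage, Metric.mem_ball, Real.dist_eq] at hy
    exact hy
  choose! U hUmem hUg using hU
  refine ⟨⋂ g ∈ T, U g, ?_, ?_⟩
  · exact (Filter.biInter_finset_mem T).mpr hUmem
  · intro y hy f hfK
    obtain ⟨g, hgT, hgnet⟩ := hTnet f hfK
    have hyU : y ∈ U g := by
      have := Set.mem_iInter₂.mp hy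
      exact this g hgT
    have h1 : |f y - g y| ≤ ε/4 := hgnet y
    have h2 : |g y - g x₀| < ε/4 := hUg g hgT y hyU
    have h3 : |g x₀ - f x₀| ≤ ε/4 := by
      rw [abs_sub_comm]; exact hgnet x₀
    have t1 := abs_sub_le (f y) (g y) (f x₀)
    have t2 := abs_sub_le (g y) (g x₀) (f x₀)
    linarith


lemma closed_part {X S Y : Set (PP ι)}
    (hι : Cardinal.aleph 1 < Cardinal.mk ι)
    (hX : ∀ x ∈ X, ∀ i : ι, (1 : ℝ) / 2 ≤ (x i : ℝ))
    (hS : S = {x | Set.Countable {i : ι | (x i : ℝ) ≠ 0}})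
    (hY : Y = S ∪ X) :
    IsClosed {y : ↥Y | (y : PP ι) ∈ X} := by
  have huncount : ¬ Countable ι := by
    intro h
    have h1 : Cardinal.mk ι ≤ Cardinal.aleph0 := Cardinal.mk_le_aleph0_iff.mpr h
    have h2 : Cardinal.aleph0 < Cardinal.aleph 1 := by
      rw [← Cardinal.aleph_zero]
      exact Cardinal.aleph_lt_aleph.mpr (by norm_num)
    exact absurd (h1.trans_lt (h2.trans hι)) (lt_irrefl _)
  rw [← isOpen_compl_iff]
  rw [isOpen_iff_mem_nhds]
  intro y hy
  simp only [Set.mem_compl_iff, Set.mem_setOf_eq] at hy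
  -- y ∈ S, so some coordinate vanishes
  have hyS : (y : PP ι) ∈ S := by
    have hsub : Y ⊆ S ∪ X := le_of_eq hY
    rcases hsub y.2 with h | h
    · exact h
    · exact absurd h hy
  rw [hS, Set.mem_setOf_eq] at hyS
  have : ∃ i : ι, ((y : PP ι) i : ℝ) = 0 := by
    by_contra h
    push_neg at h
    apply huncount
    have : {i : ι | ((y : PP ι) i : ℝ) ≠ 0} = Set.univ := Set.eq_univ_of_forall h
    rw [this, Set.countable_univ_iff] at hyS
    exact hyS
  obtain ⟨i₀, hi₀⟩ := this
  -- the open set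
  have hcont : Continuous fun z : ↥Y => ((z : PP ι) i₀ : ℝ) :=
    continuous_subtype_val.comp ((continuous_apply i₀).comp continuous_subtype_val)
  have hopen : IsOpen {z : ↥Y | ((z : PP ι) i₀ : ℝ) < 1/2} :=
    isOpen_lt hcont continuous_const
  apply Filter.mem_of_superset (hopen.mem_nhds (by simp [Set.mem_setOf_eq, hi₀]))
  intro z hz
  simp only [Set.mem_setOf_eq] at hz
  simp only [Set.mem_compl_iff, Set.mem_setOf_eq]
  intro hzX
  exact absurd hz (not_lt.mpr (hX _ hzX i₀))

end PAC

theorem pseudocompact_ascoli_closed {ι : Type*}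
    (hι : Cardinal.aleph 1 < Cardinal.mk ι)
    (X S Y : Set (ι → Set.Icc (0 : ℝ) 1))
    (hX : ∀ x ∈ X, ∀ i : ι, (1 : ℝ) / 2 ≤ (x i : ℝ))
    (hS : S = {x | Set.Countable {i : ι | (x i : ℝ) ≠ 0}})
    (hY : Y = S ∪ X) :
    Pseudocompact ↥Y ∧ AscoliSpace ↥Y ∧
      IsClosed {y : ↥Y | (y : ι → Set.Icc (0 : ℝ) 1) ∈ X} := by
  have hSY : ∀ x : ι → Set.Icc (0:ℝ) 1, Set.Countable {i : ι | ((x i : ℝ)) ≠ 0} → x ∈ Y := by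
    intro x hx
    rw [hY]
    left
    rw [hS]
    exact hx
  have hCAY : ∀ A : Set ι, A.Countable → PAC.CA A ⊆ Y := by
    intro A hA x hxCA
    apply hSY
    apply Set.Countable.mono _ hA
    intro i hi
    by_contra h
    exact hi (by rw [hxCA i h]; rfl)
  exact ⟨PAC.pseudocompact_of hCAY hSY, PAC.ascoli_of hCAY hSY,
    PAC.closed_part hι hX hS hY⟩
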